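/- Fano's inequality: for discrete random variables U, V taking values in a finite set of size M, with error probability p_e = P(U ≠ V), the conditional entropy satisfies H(U | V) ≤ H_b(p_e) + p_e · log(M − 1), where H_b is the binary entropy function. -/

import Mathlib

open Finset Real Set

variable {Ω α β γ : Type*} [Fintype Ω] [Fintype α] [Fintype β] [Fintype γ]
  [DecidableEq α] [DecidableEq β] [DecidableEq γ]

/-- Probability that the random variable `X` takes value `a`, for a pmf `p` on `Ω`. -/
noncomputable def probOf (p : Ω → ℝ) (X : Ω → α) (a : α) : ℝ :=
  ∑ ω, if X ω = a then p ω else 0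

/-- Shannon entropy (in bits) of the discrete random variable `X`. -/
noncomputable def entropy (p : Ω → ℝ) (X : Ω → α) : ℝ :=
  ∑ a, -(probOf p X a * Real.logb 2 (probOf p X a))

/-- Mutual information `I(X;Y) = H(X) + H(Y) - H(X,Y)` (in bits). -/
noncomputable def mutualInfo (p : Ω → ℝ) (X : Ω → α) (Y : Ω → β) : ℝ :=
  entropy p X + entropy p Y - entropy p (fun ω => (X ω, Y ω))

/-- Conditional entropy `H(X|Y) = H(X,Y) - H(Y)` (in bits). -/
noncomputable def condEntropy (p : Ω → ℝ) (X : Ω → α) (Y : Ω → β) : ℝ :=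
  entropy p (fun ω => (X ω, Y ω)) - entropy p Y

/-- Conditional mutual information `I(X;Y|Z) = H(X|Z) + H(Y|Z) - H(X,Y|Z)` (in bits). -/
noncomputable def condMutualInfo (p : Ω → ℝ) (X : Ω → α) (Y : Ω → β) (Z : Ω → γ) : ℝ :=
  condEntropy p X Z + condEntropy p Y Z - condEntropy p (fun ω => (X ω, Y ω)) Z

/-- Binary entropy function (in bits), with the convention `0 · log 0 = 0`. -/
noncomputable def binEntropyBits (x : ℝ) : ℝ :=
  -x * Real.logb 2 x - (1 - x) * Real.logb 2 (1 - x)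

/-- `p` is a probability mass function on the finite sample space `Ω`. -/
def IsProb {Ω : Type*} [Fintype Ω] (p : Ω → ℝ) : Prop :=
  (∀ ω, 0 ≤ p ω) ∧ ∑ ω, p ω = 1

/-- Probability of the event `E`. -/
noncomputable def probEvent (p : Ω → ℝ) (E : Ω → Prop) [DecidablePred E] : ℝ :=
  ∑ ω, if E ω then p ω else 0

/-- `X` and `Y` are independent random variables. -/
def IndepRV (p : Ω → ℝ) (X : Ω → α) (Y : Ω → β) : Prop :=
  ∀ a b, probOf p (fun ω => (X ω, Y ω)) (a, b) = probOf p X a * probOf p Y b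

/- ############ auxiliary lemmas ############ -/

lemma keyIneq (a q c : ℝ) (ha : 0 ≤ a) (hq : 0 ≤ q) (hc : 0 ≤ c)
    (h : a ≠ 0 → 0 < q ∧ 0 < c) :
    a * Real.logb 2 q + a * Real.logb 2 c - a * Real.logb 2 a
      ≤ (q * c - a) / Real.log 2 := by
  rcases eq_or_lt_of_le ha with h0 | h0
  · rw [← h0]
    simp
    positivity
  · obtain ⟨hq', hc'⟩ := h (ne_of_gt h0)
    have hx : 0 < q * c / a := by positivity
    have hlog := Real.log_le_sub_one_of_pos hx
    have hlogeq : Real.log (q * c / a) = Real.log q + Real.log c - Real.log a := by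
      rw [Real.log_div (by positivity) (ne_of_gt h0), Real.log_mul (ne_of_gt hq') (ne_of_gt hc')]
    have hl2 : (0:ℝ) < Real.log 2 := Real.log_pos (by norm_num)
    have : a * ((Real.log q + Real.log c - Real.log a) / Real.log 2)
        ≤ a * ((q * c / a - 1) / Real.log 2) := by
      apply mul_le_mul_of_nonneg_left _ ha
      apply div_le_div_of_nonneg_right _ hl2.le
      rw [← hlogeq]; exact hlog
    calc a * Real.logb 2 q + a * Real.logb 2 c - a * Real.logb 2 a
        = a * ((Real.log q + Real.log c - Real.log a) / Real.log 2) := by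
          simp [Real.logb]; ring
      _ ≤ a * ((q * c / a - 1) / Real.log 2) := this
      _ = (q * c - a) / Real.log 2 := by
          field_simp

lemma probOf_nonneg (p : Ω → ℝ) (hp : ∀ ω, 0 ≤ p ω) (X : Ω → α) (a : α) :
    0 ≤ probOf p X a := by
  unfold probOf; apply Finset.sum_nonneg; intro ω _; split <;> simp [hp ω]

lemma sum_probOf (p : Ω → ℝ) (X : Ω → α) :
    ∑ a, probOf p X a = ∑ ω, p ω := by
  unfold probOf; rw [Finset.sum_comm]
  apply Finset.sum_congr rfl
  intro ω _
  simp

lemma marginal (p : Ω → ℝ) (U V : Ω → α) (v : α) :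
    ∑ u, probOf p (fun ω => (U ω, V ω)) (u, v) = probOf p V v := by
  unfold probOf; rw [Finset.sum_comm]
  apply Finset.sum_congr rfl
  intro ω _
  simp [Prod.ext_iff]
  by_cases h : V ω = v <;> simp [h]

lemma diag_sum (p : Ω → ℝ) (U V : Ω → α) :
    ∑ v, probOf p (fun ω => (U ω, V ω)) (v, v)
      = probEvent p (fun ω => U ω = V ω) := by
  unfold probOf probEvent; rw [Finset.sum_comm]
  apply Finset.sum_congr rfl
  intro ω _
  by_cases h : U ω = V ω
  · simp [Prod.ext_iff, h]
  · simp only [Prod.mk.injEq]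
    rw [Finset.sum_eq_zero, if_neg h]
    intro v _
    rw [if_neg]
    rintro ⟨h1, h2⟩; exact h (h1.trans h2.symm)

lemma event_compl (p : Ω → ℝ) (h1 : ∑ ω, p ω = 1) (U V : Ω → α) :
    probEvent p (fun ω => U ω ≠ V ω) = 1 - probEvent p (fun ω => U ω = V ω) := by
  unfold probEvent
  rw [eq_sub_iff_add_eq, ← Finset.sum_add_distrib, ← h1]
  apply Finset.sum_congr rfl
  intro ω _
  by_cases h : U ω = V ω <;> simp [h]


/-- Fano's inequality: `H(U|V) ≤ H_b(p_e) + p_e log₂(M-1)`. -/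
theorem stmt2 (p : Ω → ℝ) (hp : IsProb p) (U V : Ω → α) (M : ℕ)
    (hM : 2 ≤ M) (hcard : Fintype.card α = M)
    (pe : ℝ) (hpe : pe = probEvent p (fun ω => U ω ≠ V ω)) :
    condEntropy p U V ≤ binEntropyBits pe + pe * Real.logb 2 ((M : ℝ) - 1) := by
  classical
  obtain ⟨hp0, hp1⟩ := hp
  set a : α → α → ℝ := fun u v => probOf p (fun ω => (U ω, V ω)) (u, v) with ha_def
  set q : α → ℝ := fun v => probOf p V v with hq_def
  have hM1 : (1:ℝ) < (M:ℝ) := by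
    have : (2:ℝ) ≤ (M:ℝ) := by exact_mod_cast hM
    linarith
  have hMne : (M:ℝ) - 1 ≠ 0 := by linarith
  have hMpos : (0:ℝ) < (M:ℝ) - 1 := by linarith
  have ha0 : ∀ u v, 0 ≤ a u v := fun u v => probOf_nonneg p hp0 _ _
  have hq0 : ∀ v, 0 ≤ q v := fun v => probOf_nonneg p hp0 _ _
  have hmarg : ∀ v, ∑ u, a u v = q v := fun v => marginal p U V v
  -- pe bounds and sums
  have hdiag : ∑ v, a v v = 1 - pe := by
    rw [ha_def, diag_sum p U V]
    have := event_compl p hp1 U V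
    rw [hpe, this]; ring
  have hsum : ∑ u, ∑ v, a u v = 1 := by
    have := sum_probOf p (fun ω => (U ω, V ω))
    rw [hp1, Fintype.sum_prod_type] at this
    exact this
  have hdiag2 : ∑ u, ∑ v, (if u = v then a u v else 0) = 1 - pe := by
    rw [← hdiag]
    apply Finset.sum_congr rfl
    intro u _
    rw [Finset.sum_ite_eq (Finset.univ) u (fun v => a u v)]
    simp
  have hoff : ∑ u, ∑ v, (if u = v then 0 else a u v) = pe := by
    have hsplit : ∀ u v, a u v = (if u = v then a u v else 0) + (if u = v then 0 else a u v) := by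
      intro u v; by_cases h : u = v <;> simp [h]
    have h3 : ∑ u, ∑ v, a u v
        = (∑ u, ∑ v, (if u = v then a u v else 0)) + ∑ u, ∑ v, (if u = v then 0 else a u v) := by
      rw [← Finset.sum_add_distrib]
      apply Finset.sum_congr rfl
      intro u _
      rw [← Finset.sum_add_distrib]
      exact Finset.sum_congr rfl fun v _ => hsplit u v
    linarith [hsum, hdiag2, h3]
  have hpe0 : 0 ≤ pe := by
    rw [← hoff]
    apply Finset.sum_nonneg; intro u _
    apply Finset.sum_nonneg; intro v _
    split <;> simp [ha0]
  have hpe1 : pe ≤ 1 := by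
    have : 0 ≤ ∑ v, a v v := Finset.sum_nonneg fun v _ => ha0 v v
    linarith [hdiag]
  -- pointwise bounds
  have ha_le_q : ∀ u v, a u v ≤ q v := by
    intro u v
    rw [← hmarg v]
    exact Finset.single_le_sum (fun u _ => ha0 u v) (Finset.mem_univ u)
  have ha_diag_le : ∀ v, a v v ≤ 1 - pe := by
    intro v
    rw [← hdiag]
    exact Finset.single_le_sum (fun w _ => ha0 w w) (Finset.mem_univ v)
  have ha_off_le : ∀ u v, u ≠ v → a u v ≤ pe := by
    intro u v huv
    rw [← hoff]
    calc a u v = (if u = v then 0 else a u v) := by simp [huv]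
      _ ≤ ∑ v', (if u = v' then 0 else a u v') := by
          apply Finset.single_le_sum (f := fun v' => if u = v' then 0 else a u v')
            (fun w _ => by by_cases h : u = w <;> simp [h, ha0]) (Finset.mem_univ v)
      _ ≤ ∑ u', ∑ v', (if u' = v' then 0 else a u' v') := by
          apply Finset.single_le_sum
            (f := fun u' => ∑ v', if u' = v' then 0 else a u' v')
            (fun w _ => Finset.sum_nonneg fun v' _ => by by_cases h : w = v' <;> simp [h, ha0])
            (Finset.mem_univ u)
  -- the comparison distribution
  set c : α → α → ℝ := fun u v => if u = v then 1 - pe else pe / ((M:ℝ) - 1) with hc_def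
  have hc0 : ∀ u v, 0 ≤ c u v := by
    intro u v; rw [hc_def]; dsimp only
    split
    · linarith
    · positivity
  have hcsum : ∀ v, ∑ u, c u v = 1 := by
    intro v
    have hrw : ∀ u : α, c u v
        = (if u = v then (1 - pe) - pe/((M:ℝ)-1) else 0) + pe/((M:ℝ)-1) := by
      intro u; by_cases h : u = v <;> simp [hc_def, h]
    rw [Finset.sum_congr rfl (fun u _ => hrw u), Finset.sum_add_distrib,
      Finset.sum_ite_eq' Finset.univ v (fun _ => (1 - pe) - pe/((M:ℝ)-1))]
    simp [Finset.card_univ, hcard]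
    field_simp
    ring
  -- rewrite the three entropy quantities as double sums
  have hHjoint : entropy p (fun ω => (U ω, V ω))
      = ∑ u, ∑ v, -(a u v * Real.logb 2 (a u v)) := by
    unfold entropy
    rw [Fintype.sum_prod_type]
  have hHV : entropy p V = ∑ v, ∑ u, -(a u v * Real.logb 2 (q v)) := by
    unfold entropy
    apply Finset.sum_congr rfl
    intro v _
    rw [Finset.sum_neg_distrib, ← Finset.sum_mul, hmarg v]
  have hRHS : binEntropyBits pe + pe * Real.logb 2 ((M:ℝ) - 1)
      = -(∑ u, ∑ v, a u v * Real.logb 2 (c u v)) := by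
    have hsplit2 : ∀ u v : α, a u v * Real.logb 2 (c u v)
        = (if u = v then a u v else 0) * Real.logb 2 (1 - pe)
          + (if u = v then 0 else a u v) * Real.logb 2 (pe/((M:ℝ)-1)) := by
      intro u v; by_cases h : u = v <;> simp [hc_def, h]
    have hs : ∑ u, ∑ v, a u v * Real.logb 2 (c u v)
        = (1 - pe) * Real.logb 2 (1 - pe) + pe * Real.logb 2 (pe/((M:ℝ)-1)) := by
      calc ∑ u, ∑ v, a u v * Real.logb 2 (c u v)
          = ∑ u, ∑ v, ((if u = v then a u v else 0) * Real.logb 2 (1 - pe)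
            + (if u = v then 0 else a u v) * Real.logb 2 (pe/((M:ℝ)-1))) :=
            Finset.sum_congr rfl fun u _ => Finset.sum_congr rfl fun v _ => hsplit2 u v
        _ = (∑ u, ∑ v, (if u = v then a u v else 0)) * Real.logb 2 (1 - pe)
            + (∑ u, ∑ v, (if u = v then 0 else a u v)) * Real.logb 2 (pe/((M:ℝ)-1)) := by
            simp [Finset.sum_add_distrib, Finset.sum_mul]
        _ = (1 - pe) * Real.logb 2 (1 - pe) + pe * Real.logb 2 (pe/((M:ℝ)-1)) := by
            rw [hdiag2, hoff]
    rw [hs]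
    rcases eq_or_ne pe 0 with h0 | h0
    · simp [binEntropyBits, h0]
    · rw [Real.logb_div h0 hMne]
      unfold binEntropyBits
      ring
  -- the main inequality via the key pointwise bound
  have key : ∑ u, ∑ v, (a u v * Real.logb 2 (q v) + a u v * Real.logb 2 (c u v)
      - a u v * Real.logb 2 (a u v)) ≤ 0 := by
    have hb : ∀ u v : α, a u v * Real.logb 2 (q v) + a u v * Real.logb 2 (c u v)
        - a u v * Real.logb 2 (a u v) ≤ (q v * c u v - a u v) / Real.log 2 := by
      intro u v
      apply keyIneq _ _ _ (ha0 u v) (hq0 v) (hc0 u v)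
      intro hne
      have hapos : 0 < a u v := lt_of_le_of_ne (ha0 u v) (Ne.symm hne)
      constructor
      · exact lt_of_lt_of_le hapos (ha_le_q u v)
      · by_cases h : u = v
        · subst h
          have := ha_diag_le u
          simp only [hc_def, if_pos rfl]
          linarith
        · have := ha_off_le u v h
          have hpe' : 0 < pe := lt_of_lt_of_le hapos this
          simp only [hc_def, if_neg h]
          positivity
    have hzero : ∑ u, ∑ v, (q v * c u v - a u v) / Real.log 2 = 0 := by
      have hqc : ∑ u, ∑ v, q v * c u v = 1 := by
        rw [Finset.sum_comm]
        have : ∀ v : α, ∑ u, q v * c u v = q v := by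
          intro v
          rw [← Finset.mul_sum, hcsum v, mul_one]
        rw [Finset.sum_congr rfl fun v _ => this v]
        rw [hq_def]
        rw [sum_probOf p V, hp1]
      have : ∑ u, ∑ v, (q v * c u v - a u v)
          = (∑ u, ∑ v, q v * c u v) - ∑ u, ∑ v, a u v := by
        simp [Finset.sum_sub_distrib]
      calc ∑ u, ∑ v, (q v * c u v - a u v) / Real.log 2
          = (∑ u, ∑ v, (q v * c u v - a u v)) / Real.log 2 := by
            simp only [← Finset.sum_div]
        _ = 0 := by rw [this, hqc, hsum]; simp
    calc ∑ u, ∑ v, (a u v * Real.logb 2 (q v) + a u v * Real.logb 2 (c u v)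
          - a u v * Real.logb 2 (a u v))
        ≤ ∑ u, ∑ v, (q v * c u v - a u v) / Real.log 2 :=
          Finset.sum_le_sum fun u _ => Finset.sum_le_sum fun v _ => hb u v
      _ = 0 := hzero
  -- assemble
  unfold condEntropy
  rw [hHjoint, hHV, hRHS]
  have hswap : ∑ v, ∑ u, -(a u v * Real.logb 2 (q v))
      = ∑ u, ∑ v, -(a u v * Real.logb 2 (q v)) := Finset.sum_comm
  rw [hswap]
  have e1 : ∑ u, ∑ v, (a u v * Real.logb 2 (q v) + a u v * Real.logb 2 (c u v)
      - a u v * Real.logb 2 (a u v))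
      = (∑ u, ∑ v, a u v * Real.logb 2 (q v)) + (∑ u, ∑ v, a u v * Real.logb 2 (c u v))
        - ∑ u, ∑ v, a u v * Real.logb 2 (a u v) := by
    simp [Finset.sum_add_distrib, Finset.sum_sub_distrib]
  have e2 : ∑ u, ∑ v, -(a u v * Real.logb 2 (a u v))
      = -∑ u, ∑ v, a u v * Real.logb 2 (a u v) := by
    simp
  have e3 : ∑ u, ∑ v, -(a u v * Real.logb 2 (q v))
      = -∑ u, ∑ v, a u v * Real.logb 2 (q v) := by
    simp
  rw [e2, e3]
  linarith [key, e1]
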